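/- arXiv:2411.13763 — 4 statements merged into one kernel-verified Lean document; each statement's English description precedes it below -/
import Mathlib

section
/- Let d ≥ 2s ≥ 2. There exists a subset H of {x ∈ {0,1}^d : ‖x‖₀ = s} such that any two distinct elements of H have Hamming distance greater than s/16, and log|H| ≥ c·s·log(d/s) for an absolute constant c > 0. -/
open Finset

lemma succ_pow_le (r : ℕ) (hr : 1 ≤ r) : (r+1)^r ≤ 3 * r^r := by
  have key : ((r:ℝ)+1)^r ≤ 3 * (r:ℝ)^r := by
    have h1 : ((r:ℝ)+1) ≤ r * Real.exp (1/r) := by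
      have := Real.add_one_le_exp (1/(r:ℝ))
      have hr0 : (0:ℝ) < r := by exact_mod_cast hr
      calc ((r:ℝ)+1) = r * (1/r + 1) := by field_simp; ring
        _ ≤ r * Real.exp (1/r) := by
            apply mul_le_mul_of_nonneg_left (by linarith) hr0.le
    have hr0 : (0:ℝ) < r := by exact_mod_cast hr
    calc ((r:ℝ)+1)^r ≤ (r * Real.exp (1/r))^r := by
          apply pow_le_pow_left₀ (by positivity) h1
      _ = (r:ℝ)^r * Real.exp (1/r) ^ r := mul_pow _ _ _
      _ = (r:ℝ)^r * Real.exp 1 := by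
          rw [← Real.exp_nat_mul]
          congr 1
          field_simp
      _ ≤ (r:ℝ)^r * 3 := by
          apply mul_le_mul_of_nonneg_left _ (by positivity)
          exact (Real.exp_one_lt_d9.le.trans (by norm_num))
      _ = 3 * (r:ℝ)^r := mul_comm _ _
  exact_mod_cast key

lemma pow_self_le (r : ℕ) : r^r ≤ 3^r * r.factorial := by
  induction r with
  | zero => simp
  | succ n ih =>
    rcases Nat.eq_zero_or_pos n with h | h
    · subst h; simp
    calc (n+1)^(n+1) = (n+1)^n * (n+1) := by ring
      _ ≤ (3 * n^n) * (n+1) := Nat.mul_le_mul_right _ (succ_pow_le n h)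
      _ ≤ (3 * (3^n * n.factorial)) * (n+1) := by
          apply Nat.mul_le_mul_right
          exact Nat.mul_le_mul_left _ ih
      _ = 3^(n+1) * (n+1).factorial := by
          rw [Nat.factorial_succ]; ring

lemma choose_le_96 (s r : ℕ) (h : s ≤ 32 * r) : s.choose r ≤ 96 ^ r := by
  have h1 : s.choose r * r.factorial ≤ 96 ^ r * r.factorial := by
    calc s.choose r * r.factorial = s.descFactorial r := by
          rw [Nat.descFactorial_eq_factorial_mul_choose]; ring
      _ ≤ s ^ r := Nat.descFactorial_le_pow _ _
      _ ≤ (32 * r) ^ r := Nat.pow_le_pow_left h _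
      _ = 32 ^ r * r ^ r := mul_pow _ _ _
      _ ≤ 32 ^ r * (3 ^ r * r.factorial) := Nat.mul_le_mul_left _ (pow_self_le r)
      _ = 96 ^ r * r.factorial := by rw [← mul_assoc, ← mul_pow]; norm_num
  exact Nat.le_of_mul_le_mul_right h1 r.factorial_pos

lemma choose_mono_left (n : ℕ) : ∀ r, ∀ i ≤ r, 2 * r ≤ n → n.choose i ≤ n.choose r := by
  intro r
  induction r with
  | zero => intro i hi _; interval_cases i; rfl
  | succ m ih =>
    intro i hi hn
    rcases Nat.lt_or_ge i (m+1) with h | h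
    · have h1 : n.choose i ≤ n.choose m := ih i (by omega) (by omega)
      refine h1.trans (Nat.choose_le_succ_of_lt_half_left ?_)
      omega
    · have : i = m + 1 := by omega
      subst this; rfl

lemma pow_div_le_choose (d s : ℕ) (h1 : 1 ≤ s) (h2 : s ≤ d) :
    ((d:ℝ)/s)^s ≤ (d.choose s : ℝ) := by
  have hcast : (d.choose s : ℝ) = (∏ i ∈ range s, ((d - i : ℕ) : ℝ)) / (∏ i ∈ range s, ((s - i : ℕ) : ℝ)) := by
    rw [eq_div_iff]
    · have e1 : (∏ i ∈ range s, ((s - i : ℕ) : ℝ)) = (s.factorial : ℝ) := by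
        rw [← Nat.cast_prod, ← Nat.descFactorial_eq_prod_range, Nat.descFactorial_self]
      rw [e1, ← Nat.cast_mul, mul_comm, ← Nat.descFactorial_eq_factorial_mul_choose, ← Nat.cast_prod,
        Nat.descFactorial_eq_prod_range]
    · apply ne_of_gt
      apply Finset.prod_pos
      intro i hi
      simp only [mem_range] at hi
      have : 0 < s - i := by omega
      exact_mod_cast this
  rw [hcast, ← Finset.prod_div_distrib]
  have : ((d:ℝ)/s)^s = ∏ _i ∈ range s, ((d:ℝ)/s) := by
    rw [Finset.prod_const, card_range]
  rw [this]
  apply Finset.prod_le_prod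
  · intro i _; positivity
  · intro i hi
    simp only [mem_range] at hi
    have hid : i ≤ d := by omega
    have his : i ≤ s := by omega
    rw [Nat.cast_sub hid, Nat.cast_sub his]
    rw [div_le_div_iff₀ (by exact_mod_cast h1) (by exact_mod_cast (show (0:ℕ) < s - i by omega); )]
    · have hds : (s:ℝ) ≤ d := by exact_mod_cast h2
      have hi0 : (0:ℝ) ≤ i := by positivity
      nlinarith


lemma ball_card (n q r : ℕ) (hq : 1 ≤ q) (hrn : 2 * r ≤ n) (x : Fin n → Fin q) :
    (univ.filter fun y => hammingDist x y ≤ r).card ≤ (r+1) * n.choose r * q ^ r := by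
  classical
  set idx : Finset (Finset (Fin n)) := univ.powerset.filter (fun D => D.card ≤ r) with hidx
  have hsub : (univ.filter fun y => hammingDist x y ≤ r) ⊆
      idx.biUnion (fun D => univ.filter fun y : Fin n → Fin q =>
        (univ.filter fun i => x i ≠ y i) = D) := by
    intro y hy
    simp only [mem_filter, mem_univ, true_and] at hy
    rw [mem_biUnion]
    refine ⟨univ.filter fun i => x i ≠ y i, ?_, ?_⟩
    · simp only [hidx, mem_filter, mem_powerset]
      exact ⟨subset_univ _, hy⟩
    · simp
  have hcardidx : idx.card ≤ (r+1) * n.choose r := by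
    have : idx ⊆ (range (r+1)).biUnion (fun i => powersetCard i univ) := by
      intro D hD
      simp only [hidx, mem_filter, mem_powerset] at hD
      rw [mem_biUnion]
      exact ⟨D.card, by simp [Nat.lt_succ_iff, hD.2], by simp [mem_powersetCard, hD.1]⟩
    calc idx.card ≤ ∑ i ∈ range (r+1), (powersetCard i univ : Finset (Finset (Fin n))).card :=
          (card_le_card this).trans (card_biUnion_le)
      _ ≤ ∑ _i ∈ range (r+1), n.choose r := by
          apply Finset.sum_le_sum
          intro i hi
          rw [card_powersetCard, card_univ, Fintype.card_fin]
          exact choose_mono_left n r i (by simpa [Nat.lt_succ_iff] using hi) hrn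
      _ = (r+1) * n.choose r := by simp [mul_comm]
  have hfiber : ∀ D ∈ idx, (univ.filter fun y : Fin n → Fin q =>
      (univ.filter fun i => x i ≠ y i) = D).card ≤ q ^ r := by
    intro D hD
    simp only [hidx, mem_filter, mem_powerset] at hD
    have hinj : Set.InjOn (fun y : Fin n → Fin q => (fun i : {i // i ∈ D} => y i))
        (univ.filter fun y : Fin n → Fin q => (univ.filter fun i => x i ≠ y i) = D) := by
      intro y₁ h₁ y₂ h₂ heq
      simp only [coe_filter, Set.mem_setOf_eq, mem_univ, true_and] at h₁ h₂
      funext i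
      by_cases hiD : i ∈ D
      · exact congrFun heq ⟨i, hiD⟩
      · have e₁ : x i = y₁ i := by
          by_contra hne
          exact hiD (h₁ ▸ (mem_filter.2 ⟨mem_univ _, hne⟩))
        have e₂ : x i = y₂ i := by
          by_contra hne
          exact hiD (h₂ ▸ (mem_filter.2 ⟨mem_univ _, hne⟩))
        rw [← e₁, ← e₂]
    calc (univ.filter fun y : Fin n → Fin q =>
        (univ.filter fun i => x i ≠ y i) = D).card
        ≤ Fintype.card ({i // i ∈ D} → Fin q) := by
          have := Finset.card_le_card_of_injOn _ (fun y _ => mem_univ _) hinj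
          simpa [card_univ] using this
      _ = q ^ D.card := by
          rw [Fintype.card_fun]
          simp [Fintype.card_coe]
      _ ≤ q ^ r := Nat.pow_le_pow_right hq hD.2
  calc (univ.filter fun y => hammingDist x y ≤ r).card
      ≤ (idx.biUnion (fun D => univ.filter fun y : Fin n → Fin q =>
        (univ.filter fun i => x i ≠ y i) = D)).card := card_le_card hsub
    _ ≤ ∑ D ∈ idx, (univ.filter fun y : Fin n → Fin q =>
        (univ.filter fun i => x i ≠ y i) = D).card := card_biUnion_le
    _ ≤ ∑ _D ∈ idx, q ^ r := Finset.sum_le_sum hfiber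
    _ = idx.card * q ^ r := by simp [mul_comm, Finset.sum_const]
    _ ≤ ((r+1) * n.choose r) * q ^ r := Nat.mul_le_mul_right _ hcardidx

lemma gv_packing (n q r B : ℕ) (hq : 1 ≤ q)
    (hB : ∀ x : Fin n → Fin q, (univ.filter fun y => hammingDist x y ≤ r).card ≤ B) :
    ∃ C : Finset (Fin n → Fin q),
      (∀ f ∈ C, ∀ g ∈ C, f ≠ g → r < hammingDist f g) ∧ q ^ n ≤ B * C.card := by
  classical
  set P : Finset (Finset (Fin n → Fin q)) :=
    univ.powerset.filter (fun T => ∀ f ∈ T, ∀ g ∈ T, f ≠ g → r < hammingDist f g) with hP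
  have hPne : P.Nonempty := ⟨∅, by simp [hP]⟩
  obtain ⟨T, hTP, hmax⟩ := P.exists_max_image Finset.card hPne
  simp only [hP, mem_filter, mem_powerset] at hTP
  have hcover : ∀ y : Fin n → Fin q, ∃ f, f ∈ T ∧ hammingDist f y ≤ r := by
    intro y
    by_contra hc
    push_neg at hc
    have hyT : y ∉ T := fun hy => by
      have := hc y hy
      simp [hammingDist_self] at this
    have hins : insert y T ∈ P := by
      simp only [hP, mem_filter, mem_powerset]
      refine ⟨subset_univ _, ?_⟩
      intro f hf g hg hfg
      rcases mem_insert.1 hf with hfy | hfT <;> rcases mem_insert.1 hg with hgy | hgT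
      · exact absurd (hfy.trans hgy.symm) hfg
      · rw [hfy, hammingDist_comm]
        exact hc g hgT
      · rw [hgy]
        exact hc f hfT
      · exact hTP.2 f hfT g hgT hfg
    have := hmax _ hins
    rw [Finset.card_insert_of_notMem hyT] at this
    omega
  choose F hF1 hF2 using hcover
  refine ⟨T, hTP.2, ?_⟩
  have hfib : ∀ f ∈ T, ((univ : Finset (Fin n → Fin q)).filter fun a => F a = f).card ≤ B := by
    intro f hfT
    refine le_trans (card_le_card ?_) (hB f)
    intro y hy
    simp only [mem_filter, mem_univ, true_and] at hy ⊢
    rw [← hy]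
    exact hF2 y
  have hmain := Finset.card_le_mul_card_image_of_maps_to (f := F)
    (s := (univ : Finset (Fin n → Fin q))) (t := T) (fun y _ => hF1 y) B hfib
  have hcard : (univ : Finset (Fin n → Fin q)).card = q ^ n := by
    rw [card_univ, Fintype.card_fun]
    simp
  rw [hcard] at hmain
  exact hmain

section Emb
variable {d s q : ℕ}

def emb (hsq : s * q ≤ d) (i : Fin s) (j : Fin q) : Fin d :=
  ⟨i.1 * q + j.1, by
    have h1 : i.1 * q + j.1 < (i.1 + 1) * q := by
      have := j.2
      calc i.1 * q + j.1 < i.1 * q + q := by omega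
        _ = (i.1 + 1) * q := by ring
    have h2 : (i.1 + 1) * q ≤ s * q := Nat.mul_le_mul_right _ i.2
    omega⟩

lemma emb_inj (hsq : s * q ≤ d) {i i' : Fin s} {j j' : Fin q} (h : emb hsq i j = emb hsq i' j') :
    i = i' ∧ j = j' := by
  have h' : i.1 * q + j.1 = i'.1 * q + j'.1 := congrArg Fin.val h
  have hj := j.2
  have hj' := j'.2
  have hii : i.1 = i'.1 := by
    rcases Nat.lt_trichotomy i.1 i'.1 with hlt | heq | hgt
    · have : (i.1 + 1) * q ≤ i'.1 * q := Nat.mul_le_mul_right _ hlt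
      nlinarith [this]
    · exact heq
    · have : (i'.1 + 1) * q ≤ i.1 * q := Nat.mul_le_mul_right _ hgt
      nlinarith [this]
  refine ⟨Fin.ext hii, Fin.ext ?_⟩
  rw [hii] at h'
  exact Nat.add_left_cancel h' 

noncomputable def codeVec (hsq : s * q ≤ d) (f : Fin s → Fin q) : Fin d → Bool :=
  fun t => decide (∃ i : Fin s, emb hsq i (f i) = t)

lemma codeVec_support (hsq : s * q ≤ d) (f : Fin s → Fin q) :
    (univ.filter fun t => codeVec hsq f t = true) = univ.image (fun i => emb hsq i (f i)) := by
  ext t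
  simp [codeVec, mem_filter, mem_image, eq_comm]

lemma codeVec_support_card (hsq : s * q ≤ d) (f : Fin s → Fin q) :
    (univ.filter fun t => codeVec hsq f t = true).card = s := by
  rw [codeVec_support hsq]
  rw [Finset.card_image_of_injOn]
  · simp
  · intro i _ i' _ h
    exact (emb_inj hsq h).1

lemma codeVec_dist (hsq : s * q ≤ d) (f g : Fin s → Fin q) :
    hammingDist f g ≤ hammingDist (codeVec hsq f) (codeVec hsq g) := by
  unfold hammingDist
  apply Finset.card_le_card_of_injOn (fun i => emb hsq i (f i))
  · intro i hi
    simp only [mem_coe, mem_filter, mem_univ, true_and] at hi ⊢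
    have h1 : codeVec hsq f (emb hsq i (f i)) = true := decide_eq_true ⟨i, rfl⟩
    have h2 : codeVec hsq g (emb hsq i (f i)) = false := by
      simp only [codeVec, decide_eq_false_iff_not]
      rintro ⟨i', hi'⟩
      obtain ⟨hii, hjj⟩ := emb_inj hsq hi'
      subst hii
      exact hi hjj.symm
    rw [h1, h2]
    simp
  · intro i _ i' _ h
    exact (emb_inj hsq h).1

end Emb

/-- Sparse Varshamov–Gilbert packing: there is an absolute constant c > 0 such that
for all d ≥ 2s ≥ 2 there is a family H of s-sparse binary vectors in {0,1}^d whose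
pairwise Hamming distances exceed s/16 and with log|H| ≥ c·s·log(d/s). -/
theorem stmt6 :
    ∃ c : ℝ, 0 < c ∧ ∀ d s : ℕ, 1 ≤ s → 2 * s ≤ d →
      ∃ H : Finset (Fin d → Bool),
        (∀ x ∈ H, (univ.filter fun i => x i = true).card = s) ∧
        (∀ x ∈ H, ∀ y ∈ H, x ≠ y → (s : ℝ) / 16 < (hammingDist x y : ℝ)) ∧
        c * s * Real.log ((d : ℝ) / s) ≤ Real.log H.card := by
  classical
  refine ⟨1/8, by norm_num, ?_⟩
  intro d s h1 h2
  have hs0 : 0 < s := h1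
  have hs0R : (0:ℝ) < s := by exact_mod_cast hs0
  have hds1 : (1:ℝ) ≤ (d:ℝ)/s := by
    rw [le_div_iff₀ hs0R]
    have : s ≤ d := by omega
    exact_mod_cast by simpa using this
  have hlogds : 0 ≤ Real.log ((d:ℝ)/s) := Real.log_nonneg hds1
  by_cases hs32 : 32 ≤ s
  · -- large s : Gilbert-Varshamov construction
    set q := d / s with hqdef
    have hq2 : 2 ≤ q := (Nat.le_div_iff_mul_le hs0).2 h2
    have hsq : s * q ≤ d := by rw [mul_comm]; exact Nat.div_mul_le_self d s
    set r := s / 16 with hrdef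
    have hr2 : 2 ≤ r := by omega
    have hrs : 16 * r ≤ s := by omega
    have hsr : s ≤ 16 * r + 15 := by omega
    obtain ⟨C, hCdist, hCcard⟩ := gv_packing s q r ((r+1) * s.choose r * q ^ r) (by omega)
      (ball_card s q r (by omega) (by omega))
    have hC1 : 1 ≤ C.card := by
      have hq0 : 0 < q ^ s := pow_pos (by omega : 0 < q) s
      by_contra hC
      have hc0 : C.card = 0 := by omega
      rw [hc0, Nat.mul_zero] at hCcard
      omega
    have hinj : Set.InjOn (codeVec hsq) (C : Set (Fin s → Fin q)) := by
      intro f hf g hg hfg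
      by_contra hne
      have h3 := hCdist f hf g hg hne
      have h4 := codeVec_dist hsq f g
      rw [hfg] at h4
      simp only [hammingDist_self, Nat.le_zero, hammingDist_eq_zero] at h4
      exact hne h4
    refine ⟨C.image (codeVec hsq), ?_, ?_, ?_⟩
    · intro x hx
      obtain ⟨f, _, rfl⟩ := mem_image.1 hx
      exact codeVec_support_card hsq f
    · intro x hx y hy hxy
      obtain ⟨f, hf, rfl⟩ := mem_image.1 hx
      obtain ⟨g, hg, rfl⟩ := mem_image.1 hy
      have hfg : f ≠ g := fun h => hxy (by rw [h])
      have h3 := hCdist f hf g hg hfg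
      have h4 := codeVec_dist hsq f g
      have h5 : r + 1 ≤ hammingDist (codeVec hsq f) (codeVec hsq g) := by omega
      have : (s:ℝ) < 16 * (r + 1) := by exact_mod_cast (by omega : s < 16 * (r+1))
      have h6 : ((r:ℝ) + 1) ≤ (hammingDist (codeVec hsq f) (codeVec hsq g) : ℝ) := by
        exact_mod_cast h5
      linarith
    · rw [Finset.card_image_of_injOn hinj]
      -- numeric bound
      have hnat : q ^ s ≤ 192 ^ r * q ^ r * C.card := by
        calc q ^ s ≤ (r+1) * s.choose r * q ^ r * C.card := hCcard
          _ ≤ 2 ^ r * 96 ^ r * q ^ r * C.card := by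
              have e1 : r + 1 ≤ 2 ^ r := Nat.lt_two_pow_self
              have e2 : s.choose r ≤ 96 ^ r := choose_le_96 s r (by omega)
              exact Nat.mul_le_mul_right _ (Nat.mul_le_mul_right _ (Nat.mul_le_mul e1 e2))
          _ = 192 ^ r * q ^ r * C.card := by rw [← mul_pow]; norm_num
      have hq0R : (0:ℝ) < q := by positivity
      have hq2R : (2:ℝ) ≤ q := by exact_mod_cast hq2
      set Lq := Real.log q with hLq
      have hLq2 : Real.log 2 ≤ Lq := Real.log_le_log (by norm_num) hq2R
      have hlog2 : (0:ℝ) < Real.log 2 := Real.log_pos (by norm_num)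
      have hLq0 : 0 < Lq := lt_of_lt_of_le hlog2 hLq2
      have hCpos : (0:ℝ) < C.card := by exact_mod_cast hC1
      have key : (s:ℝ) * Lq ≤ r * Real.log 192 + r * Lq + Real.log C.card := by
        have hcast : ((q:ℝ)) ^ s ≤ 192 ^ r * (q:ℝ) ^ r * C.card := by exact_mod_cast hnat
        have hlog := Real.log_le_log (by positivity) hcast
        rw [Real.log_pow] at hlog
        rw [Real.log_mul (by positivity) (by positivity),
          Real.log_mul (by positivity) (by positivity), Real.log_pow, Real.log_pow] at hlog
        linarith
      have hdq : Real.log ((d:ℝ)/s) ≤ 2 * Lq := by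
        have hn1 : d < s * (q + 1) := by
          have hmod := Nat.div_add_mod d s
          have hmod2 : d % s < s := Nat.mod_lt d hs0
          calc d = s * q + d % s := by
                rw [hqdef]
                exact (Nat.div_add_mod d s).symm
            _ < s * q + s := Nat.add_lt_add_left hmod2 _
            _ = s * (q + 1) := by ring
        have hn2 : (q:ℝ) + 1 ≤ (q:ℝ)^2 := by nlinarith
        have hn3 : (d:ℝ) < s * ((q:ℝ)^2) := by
          have : (d:ℝ) < s * ((q:ℝ) + 1) := by exact_mod_cast hn1
          nlinarith
        have hn4 : (d:ℝ)/s ≤ (q:ℝ)^2 := by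
          rw [div_le_iff₀ hs0R]
          nlinarith
        calc Real.log ((d:ℝ)/s) ≤ Real.log ((q:ℝ)^2) :=
              Real.log_le_log (by linarith) hn4
          _ = 2 * Lq := by rw [Real.log_pow]; norm_num [hLq]
      have hlog192 : Real.log 192 ≤ 11 * Real.log 2 := by
        calc Real.log 192 ≤ Real.log 2048 := Real.log_le_log (by norm_num) (by norm_num)
          _ = 11 * Real.log 2 := by
              rw [show (2048:ℝ) = 2 ^ 11 by norm_num, Real.log_pow]
              norm_num
      have hrR : (r:ℝ) ≤ (s:ℝ)/16 := by
        rw [le_div_iff₀ (by norm_num : (0:ℝ) < 16)]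
        exact_mod_cast (by omega : r * 16 ≤ s)
      have ha : (r:ℝ) * Real.log 192 ≤ ((s:ℝ)/16) * (11 * Lq) := by
        apply mul_le_mul hrR (by linarith) (by positivity) (by positivity)
      have hb : (r:ℝ) * Lq ≤ ((s:ℝ)/16) * Lq :=
        mul_le_mul_of_nonneg_right hrR hLq0.le
      have hc : 1/8 * (s:ℝ) * Real.log ((d:ℝ)/s) ≤ 1/8 * (s:ℝ) * (2 * Lq) := by
        apply mul_le_mul_of_nonneg_left hdq (by positivity)
      linarith
  · -- small s : all s-sparse vectors
    push_neg at hs32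
    refine ⟨(powersetCard s (univ : Finset (Fin d))).image (fun A => fun i => decide (i ∈ A)),
      ?_, ?_, ?_⟩
    · intro x hx
      obtain ⟨A, hA, rfl⟩ := mem_image.1 hx
      rw [mem_powersetCard] at hA
      have : (univ.filter fun i => decide (i ∈ A) = true) = A := by
        ext i; simp
      rw [this]
      exact hA.2
    · intro x hx y hy hxy
      obtain ⟨A, hA, rfl⟩ := mem_image.1 hx
      obtain ⟨B, hB, rfl⟩ := mem_image.1 hy
      rw [mem_powersetCard] at hA hB
      have hAB : A ≠ B := fun h => hxy (by rw [h])
      have hABcard : A.card = B.card := by rw [hA.2, hB.2]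
      have hABne : (A \ B).Nonempty := by
        rw [sdiff_nonempty]
        intro hsub
        exact hAB (Finset.eq_of_subset_of_card_le hsub (le_of_eq hABcard.symm))
      have hBAne : (B \ A).Nonempty := by
        rw [sdiff_nonempty]
        intro hsub
        exact hAB (Finset.eq_of_subset_of_card_le hsub (le_of_eq hABcard)).symm
      obtain ⟨a, ha⟩ := hABne
      obtain ⟨b, hb⟩ := hBAne
      rw [mem_sdiff] at ha hb
      have hab : a ≠ b := fun h => ha.2 (h ▸ hb.1)
      have h2le : 2 ≤ hammingDist (fun i => decide (i ∈ A)) (fun i => decide (i ∈ B)) := by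
        unfold hammingDist
        have hsub : ({a, b} : Finset (Fin d)) ⊆
            univ.filter (fun i => decide (i ∈ A) ≠ decide (i ∈ B)) := by
          intro t ht
          rw [mem_insert, mem_singleton] at ht
          simp only [mem_filter, mem_univ, true_and]
          rcases ht with rfl | rfl
          · simp [ha.1, ha.2]
          · simp [hb.1, hb.2]
        calc 2 = ({a, b} : Finset (Fin d)).card := (Finset.card_pair hab).symm
          _ ≤ _ := card_le_card hsub
      have : (s:ℝ)/16 < 2 := by
        have : (s:ℝ) ≤ 31 := by exact_mod_cast (by omega : s ≤ 31)
        linarith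
      have h2R : (2:ℝ) ≤ (hammingDist (fun i => decide (i ∈ A)) (fun i => decide (i ∈ B)) : ℝ) := by
        exact_mod_cast h2le
      linarith
    · have hcard : ((powersetCard s (univ : Finset (Fin d))).image
          (fun A => fun i => decide (i ∈ A))).card = d.choose s := by
        rw [Finset.card_image_of_injOn, card_powersetCard, card_univ, Fintype.card_fin]
        intro A hA B hB hfun
        ext i
        have := congrFun hfun i
        simp only [decide_eq_decide] at this
        exact this
      rw [hcard]
      have hchoosepos : (0:ℝ) < ((d:ℝ)/s)^s := by positivity
      have hle := pow_div_le_choose d s h1 (by omega)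
      have := Real.log_le_log hchoosepos hle
      rw [Real.log_pow] at this
      have hfin : 1/8 * (s:ℝ) * Real.log ((d:ℝ)/s) ≤ (s:ℝ) * Real.log ((d:ℝ)/s) := by
        nlinarith
      linarith
end

section
/- Let Z ~ N(0, I_d), θ* ∈ ℝ^d, and let f_{u|z}(0) ≤ C for all z. Then for every unit vector v, the quantity 2∫(zᵀv)² f_{u|z}(0) φ(θ*ᵀz)∏_jφ(z_j) dz is at most 2C·vᵀ(I + θ*θ*ᵀ)^{−1}v / ((2π)^{1/2}|I + θ*θ*ᵀ|^{1/2}), which is at most 2C/((2π)^{1/2}(1 + ‖θ*‖₂²)^{1/2}). Consequently the maximal eigenvalue of this quadratic form tends to 0 at rate 1/‖θ*‖₂ as ‖θ*‖₂ → ∞. -/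
open Finset MeasureTheory Matrix

section aux

open Filter

lemma g_int0 : Integrable (fun x : ℝ => Real.exp (-x ^ 2 / 2)) := by
  have := integrable_exp_neg_mul_sq (b := (1:ℝ)/2) (by norm_num)
  convert this using 2 with x
  ring_nf

lemma g_int1 : Integrable (fun x : ℝ => x * Real.exp (-x ^ 2 / 2)) := by
  have := integrable_mul_exp_neg_mul_sq (b := (1:ℝ)/2) (by norm_num)
  convert this using 2 with x
  ring_nf

lemma g_int2 : Integrable (fun x : ℝ => x ^ 2 * Real.exp (-x ^ 2 / 2)) := by
  have := integrable_rpow_mul_exp_neg_mul_sq (b := (1:ℝ)/2) (by norm_num)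
      (s := (2:ℝ)) (by norm_num)
  convert this using 2 with x
  rw [show ((2:ℝ) = ((2:ℕ):ℝ)) by norm_num, Real.rpow_natCast]
  ring_nf

lemma g_val0 : ∫ x : ℝ, Real.exp (-x ^ 2 / 2) = Real.sqrt (2 * Real.pi) := by
  have := integral_gaussian ((1:ℝ)/2)
  rw [show Real.pi / (1/2) = 2 * Real.pi by ring] at this
  rw [← this]
  congr 1 with x
  ring_nf

lemma g_tend_exp : Tendsto (fun x : ℝ => Real.exp (-x ^ 2 / 2)) atTop (nhds 0) := by
  apply Real.tendsto_exp_atBot.comp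
  apply Tendsto.atBot_div_const (by norm_num)
  exact tendsto_neg_atBot_iff.mpr (tendsto_pow_atTop (by norm_num))

lemma g_tend_mul : Tendsto (fun x : ℝ => x * Real.exp (-x ^ 2 / 2)) atTop (nhds 0) := by
  have h := rpow_mul_exp_neg_mul_sq_isLittleO_exp_neg (b := (1:ℝ)/2) (by norm_num) 1
  have h3 : Tendsto (fun x : ℝ => Real.exp (-(1/2) * x)) atTop (nhds 0) := by
    apply Real.tendsto_exp_atBot.comp
    have h4 : Tendsto (fun x : ℝ => x / 2) atTop atTop :=
      Tendsto.atTop_div_const (by norm_num) tendsto_id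
    have h5 := tendsto_neg_atBot_iff.mpr h4
    apply h5.congr; intro x; ring
  have := h.trans_tendsto h3
  apply this.congr'
  filter_upwards [eventually_ge_atTop (0:ℝ)] with x hx
  rw [Real.rpow_one]; ring_nf

lemma g_tend_exp_bot : Tendsto (fun x : ℝ => Real.exp (-x ^ 2 / 2)) atBot (nhds 0) := by
  have h := g_tend_exp.comp tendsto_neg_atBot_atTop
  apply h.congr; intro x
  simp [Function.comp, neg_sq]

lemma g_tend_mul_bot : Tendsto (fun x : ℝ => x * Real.exp (-x ^ 2 / 2)) atBot (nhds 0) := by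
  have h := (g_tend_mul.comp tendsto_neg_atBot_atTop).neg
  rw [neg_zero] at h
  apply h.congr; intro x
  simp only [Function.comp_apply, neg_sq, neg_mul, neg_neg]

lemma g_deriv1 (x : ℝ) : HasDerivAt (fun x : ℝ => -Real.exp (-x ^ 2 / 2))
    (x * Real.exp (-x ^ 2 / 2)) x := by
  have h1 : HasDerivAt (fun x : ℝ => -x ^ 2 / 2) (-x) x := by
    have := ((hasDerivAt_pow 2 x).neg).div_const 2
    simpa using this.congr_deriv (by ring)
  have := (h1.exp).neg
  exact this.congr_deriv (by ring)

lemma g_val1 : ∫ x : ℝ, x * Real.exp (-x ^ 2 / 2) = 0 := by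
  have := integral_of_hasDerivAt_of_tendsto g_deriv1 g_int1
    g_tend_exp_bot.neg g_tend_exp.neg
  simpa using this

lemma g_deriv2 (x : ℝ) : HasDerivAt (fun x : ℝ => -(x * Real.exp (-x ^ 2 / 2)))
    (x ^ 2 * Real.exp (-x ^ 2 / 2) - Real.exp (-x ^ 2 / 2)) x := by
  have h1 : HasDerivAt (fun x : ℝ => -x ^ 2 / 2) (-x) x := by
    have := ((hasDerivAt_pow 2 x).neg).div_const 2
    simpa using this.congr_deriv (by ring)
  have h2 := (hasDerivAt_id x).mul h1.exp
  have := h2.neg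
  exact this.congr_deriv (by simp only [id_eq]; ring)

lemma g_val2 : ∫ x : ℝ, x ^ 2 * Real.exp (-x ^ 2 / 2) = Real.sqrt (2 * Real.pi) := by
  have := integral_of_hasDerivAt_of_tendsto g_deriv2 (g_int2.sub g_int0)
    g_tend_mul_bot.neg g_tend_mul.neg
  simp only [neg_zero, sub_zero] at this
  have h2 := integral_sub g_int2 g_int0
  rw [h2] at this
  rw [g_val0] at this
  linarith

noncomputable def gf {d : ℕ} (i j k : Fin d) : ℝ → ℝ :=
  fun t => (if k = i then t else 1) * (if k = j then t else 1) * Real.exp (-t ^ 2 / 2)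

lemma gf_int {d : ℕ} (i j k : Fin d) : Integrable (gf i j k) := by
  by_cases h : k = i <;> by_cases h' : k = j
  · have : gf i j k = fun t : ℝ => t ^ 2 * Real.exp (-t ^ 2 / 2) := by
      funext t; unfold gf; simp [if_pos h, if_pos h', sq]
    rw [this]; exact g_int2
  · have : gf i j k = fun t : ℝ => t * Real.exp (-t ^ 2 / 2) := by
      funext t; unfold gf; simp [if_pos h, if_neg h']
    rw [this]; exact g_int1
  · have : gf i j k = fun t : ℝ => t * Real.exp (-t ^ 2 / 2) := by
      funext t; unfold gf; simp [if_neg h, if_pos h']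
    rw [this]; exact g_int1
  · have : gf i j k = fun t : ℝ => Real.exp (-t ^ 2 / 2) := by
      funext t; unfold gf; simp [if_neg h, if_neg h']
    rw [this]; exact g_int0

lemma gf_prod {d : ℕ} (i j : Fin d) (x : Fin d → ℝ) :
    ∏ k, gf i j k (x k) = x i * x j * Real.exp (-(∑ k, x k ^ 2) / 2) := by
  unfold gf
  rw [Finset.prod_mul_distrib, Finset.prod_mul_distrib]
  congr 1
  · congr 1
    · rw [Finset.prod_ite_eq' Finset.univ i (fun k => x k)]; simp
    · rw [Finset.prod_ite_eq' Finset.univ j (fun k => x k)]; simp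
  · rw [← Real.exp_sum]
    congr 1
    simp [neg_div, ← Finset.sum_div]

lemma gf_intval {d : ℕ} (i j : Fin d) :
    ∫ x : Fin d → ℝ, x i * x j * Real.exp (-(∑ k, x k ^ 2) / 2)
      = if i = j then Real.sqrt (2 * Real.pi) ^ d else 0 := by
  rw [show (fun x : Fin d → ℝ => x i * x j * Real.exp (-(∑ k, x k ^ 2) / 2))
      = fun x => ∏ k, gf i j k (x k) from funext fun x => (gf_prod i j x).symm]
  rw [MeasureTheory.integral_fintype_prod_volume_eq_prod]
  rcases eq_or_ne i j with h | h
  · subst h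
    rw [if_pos rfl]
    have : ∀ k : Fin d, ∫ t, gf i i k t = Real.sqrt (2 * Real.pi) := by
      intro k
      rcases eq_or_ne k i with h | h
      · rw [h]
        have : gf i i i = fun t : ℝ => t ^ 2 * Real.exp (-t ^ 2 / 2) := by
          funext t; unfold gf; simp [sq]
        rw [this, g_val2]
      · have : gf i i k = fun t : ℝ => Real.exp (-t ^ 2 / 2) := by
          funext t; unfold gf; simp [if_neg h]
        rw [this, g_val0]
    rw [Finset.prod_congr rfl fun k _ => this k]
    simp [Finset.prod_const]
  · rw [if_neg h]
    apply Finset.prod_eq_zero (Finset.mem_univ i)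
    have : gf i j i = fun t : ℝ => t * Real.exp (-t ^ 2 / 2) := by
      funext t; unfold gf; simp [if_neg h]
    rw [this, g_val1]

lemma gauss_pi {d : ℕ} (u : Fin d → ℝ) :
    Integrable (fun x : Fin d → ℝ =>
        (∑ i, u i * x i) ^ 2 * Real.exp (-(∑ i, x i ^ 2) / 2)) ∧
    ∫ x : Fin d → ℝ, (∑ i, u i * x i) ^ 2 * Real.exp (-(∑ i, x i ^ 2) / 2)
      = Real.sqrt (2 * Real.pi) ^ d * ∑ i, u i ^ 2 := by
  have hterm : ∀ i j : Fin d,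
      Integrable (fun x : Fin d → ℝ => x i * x j * Real.exp (-(∑ k, x k ^ 2) / 2)) := by
    intro i j
    exact (Integrable.fintype_prod (fun k => gf_int i j k)).congr
      (Filter.Eventually.of_forall fun x => gf_prod i j x)
  have hbig_eq : (fun x : Fin d → ℝ =>
        (∑ i, u i * x i) ^ 2 * Real.exp (-(∑ i, x i ^ 2) / 2))
      = fun x => ∑ i, ∑ j, (u i * u j) *
          (x i * x j * Real.exp (-(∑ k, x k ^ 2) / 2)) := by
    funext x
    rw [sq, Finset.sum_mul_sum, Finset.sum_mul]
    exact Finset.sum_congr rfl fun i _ => by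
      rw [Finset.sum_mul]
      exact Finset.sum_congr rfl fun j _ => by ring
  have hint : Integrable (fun x : Fin d → ℝ =>
      (∑ i, u i * x i) ^ 2 * Real.exp (-(∑ i, x i ^ 2) / 2)) := by
    rw [hbig_eq]
    exact integrable_finset_sum _ fun i _ =>
      integrable_finset_sum _ fun j _ => (hterm i j).const_mul _
  refine ⟨hint, ?_⟩
  rw [hbig_eq, integral_finset_sum _ fun i _ =>
    integrable_finset_sum _ fun j _ => (hterm i j).const_mul _]
  rw [Finset.sum_congr rfl fun i _ => integral_finset_sum _
    fun j _ => (hterm i j).const_mul _]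
  have : ∀ i j : Fin d, ∫ x : Fin d → ℝ,
      (u i * u j) * (x i * x j * Real.exp (-(∑ k, x k ^ 2) / 2))
      = (u i * u j) * if i = j then Real.sqrt (2 * Real.pi) ^ d else 0 := by
    intro i j
    rw [integral_const_mul, gf_intval]
  rw [Finset.sum_congr rfl fun i _ => Finset.sum_congr rfl fun j _ => this i j]
  rw [Finset.mul_sum]
  refine Finset.sum_congr rfl fun i _ => ?_
  rw [Finset.sum_eq_single i]
  · rw [if_pos rfl]; ring
  · intro j _ hj; rw [if_neg (Ne.symm hj), mul_zero]
  · intro h; exact absurd (Finset.mem_univ i) h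

lemma PP {d : ℕ} (θ : Fin d → ℝ) :
    vecMulVec θ θ * vecMulVec θ θ = (∑ i, θ i ^ 2) • vecMulVec θ θ := by
  ext i j
  simp only [Matrix.mul_apply, vecMulVec_apply, Matrix.smul_apply, smul_eq_mul]
  rw [Finset.sum_congr rfl fun k _ =>
    show θ i * θ k * (θ k * θ j) = θ k ^ 2 * (θ i * θ j) by ring, ← Finset.sum_mul]

lemma detM {d : ℕ} (θ : Fin d → ℝ) :
    (1 + vecMulVec θ θ).det = 1 + ∑ i, θ i ^ 2 := by
  rw [vecMulVec_eq Unit θ θ, Matrix.det_one_add_replicateCol_mul_replicateRow]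
  congr 1
  simp [dotProduct, sq]

lemma Pv {d : ℕ} (θ v : Fin d → ℝ) :
    vecMulVec θ θ *ᵥ v = (∑ i, θ i * v i) • θ := by
  ext i
  simp only [Matrix.mulVec, vecMulVec_apply, dotProduct, Pi.smul_apply, smul_eq_mul]
  rw [Finset.sum_congr rfl fun k _ => show θ i * θ k * v k = (θ k * v k) * θ i by ring,
    ← Finset.sum_mul]

lemma Ptrans {d : ℕ} (θ : Fin d → ℝ) : (vecMulVec θ θ)ᵀ = vecMulVec θ θ := by
  ext i j; simp [vecMulVec_apply, mul_comm]

end aux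


set_option maxHeartbeats 1000000 in
/-- Counterexample to restricted strong convexity with diverging ‖θ*‖₂: for
Z ~ N(0, I_d), a conditional density value f_{u|z}(0) ≤ C, and a unit vector v,
the curvature quantity 2∫(zᵀv)² f_{u|z}(0) φ(θ*ᵀz)∏φ(zⱼ) dz is bounded by
2C·vᵀ(I + θ*θ*ᵀ)⁻¹v/(√(2π)·√det(I + θ*θ*ᵀ)), which is at most
2C/(√(2π)·√(1 + ‖θ*‖₂²)). -/
theorem stmt13 (d : ℕ) (C : ℝ) (hC : 0 < C) (θs : Fin d → ℝ)
    (f : (Fin d → ℝ) → ℝ) (hf0 : ∀ z, 0 ≤ f z) (hfC : ∀ z, f z ≤ C)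
    (v : Fin d → ℝ) (hv : ∑ i, (v i) ^ 2 = 1) :
    let φ : ℝ → ℝ := fun u => (Real.sqrt (2 * Real.pi))⁻¹ * Real.exp (-u ^ 2 / 2)
    let M : Matrix (Fin d) (Fin d) ℝ := 1 + Matrix.vecMulVec θs θs
    (2 * ∫ z : Fin d → ℝ,
        (∑ i, z i * v i) ^ 2 * f z * φ (∑ i, θs i * z i) * ∏ i, φ (z i))
      ≤ 2 * C * (v ⬝ᵥ (M⁻¹ *ᵥ v)) / (Real.sqrt (2 * Real.pi) * Real.sqrt M.det) ∧
    2 * C * (v ⬝ᵥ (M⁻¹ *ᵥ v)) / (Real.sqrt (2 * Real.pi) * Real.sqrt M.det)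
      ≤ 2 * C / (Real.sqrt (2 * Real.pi) * Real.sqrt (1 + ∑ i, (θs i) ^ 2)) := by
  intro φ M
  have hφdef : φ = fun u => (Real.sqrt (2 * Real.pi))⁻¹ * Real.exp (-u ^ 2 / 2) := rfl
  have hMdef : M = 1 + Matrix.vecMulVec θs θs := rfl
  set s : ℝ := ∑ i, θs i ^ 2 with hs_def
  have hs0 : 0 ≤ s := Finset.sum_nonneg fun i _ => sq_nonneg _
  have hs1 : (0:ℝ) < 1 + s := by linarith
  have hdet : M.det = 1 + s := by rw [hMdef]; exact detM θs
  have hsqrtpi : (0:ℝ) < Real.sqrt (2 * Real.pi) :=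
    Real.sqrt_pos.mpr (by positivity)
  have hMN : M * (1 - (1 + s)⁻¹ • vecMulVec θs θs) = 1 := by
    rw [hMdef, add_mul, one_mul, mul_sub, mul_one, Matrix.mul_smul]
    rw [PP θs, ← hs_def, smul_smul]
    have h1 : (1 + s)⁻¹ • vecMulVec θs θs + ((1 + s)⁻¹ * s) • vecMulVec θs θs
        = vecMulVec θs θs := by
      rw [← add_smul]
      have h2 : (1 + s)⁻¹ + (1 + s)⁻¹ * s = 1 := by field_simp
      rw [h2, one_smul]
    have h3 : (1 : Matrix (Fin d) (Fin d) ℝ) - (1 + s)⁻¹ • vecMulVec θs θs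
        + (vecMulVec θs θs - ((1 + s)⁻¹ * s) • vecMulVec θs θs)
        = 1 + (vecMulVec θs θs
            - ((1 + s)⁻¹ • vecMulVec θs θs + ((1 + s)⁻¹ * s) • vecMulVec θs θs)) := by
      abel
    rw [h3, h1]
    simp
  have hMinv : M⁻¹ = 1 - (1 + s)⁻¹ • vecMulVec θs θs := Matrix.inv_eq_right_inv hMN
  have hθv : v ⬝ᵥ θs = ∑ i, θs i * v i := by
    simp [dotProduct, mul_comm]
  have hquad : v ⬝ᵥ (M⁻¹ *ᵥ v) = 1 - (1 + s)⁻¹ * (∑ i, θs i * v i) ^ 2 := by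
    rw [hMinv, Matrix.sub_mulVec, Matrix.one_mulVec, Matrix.smul_mulVec, Pv θs v,
      dotProduct_sub]
    congr 1
    · simp [dotProduct, sq, ← hv]
    · rw [dotProduct_smul, dotProduct_smul, smul_eq_mul, smul_eq_mul, hθv]
      ring
  have hCS : (∑ i, θs i * v i) ^ 2 ≤ s := by
    calc (∑ i, θs i * v i) ^ 2 ≤ (∑ i, θs i ^ 2) * ∑ i, v i ^ 2 :=
        Finset.sum_mul_sq_le_sq_mul_sq Finset.univ θs v
      _ = s := by rw [hv, ← hs_def, mul_one]
  have hq1 : v ⬝ᵥ (M⁻¹ *ᵥ v) ≤ 1 := by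
    rw [hquad]
    have : 0 ≤ (1 + s)⁻¹ * (∑ i, θs i * v i) ^ 2 := by positivity
    linarith
  have hq0 : 0 ≤ v ⬝ᵥ (M⁻¹ *ᵥ v) := by
    rw [hquad]
    have h1 : (1 + s)⁻¹ * (∑ i, θs i * v i) ^ 2 ≤ (1 + s)⁻¹ * s :=
      mul_le_mul_of_nonneg_left hCS (by positivity)
    have h2 : (1 + s)⁻¹ * s < 1 := by
      rw [inv_mul_lt_iff₀ hs1]; linarith
    linarith
  constructor
  · -- square root B of M
    set c : ℝ := (Real.sqrt (1 + s) - 1) / s with hc_def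
    set B : Matrix (Fin d) (Fin d) ℝ := 1 + c • vecMulVec θs θs with hB_def
    have hB2 : B * B = 1 + (c + c + c * c * s) • vecMulVec θs θs := by
      rw [hB_def, add_mul, one_mul, mul_add, Matrix.mul_one, Matrix.smul_mul,
        Matrix.mul_smul, PP θs, ← hs_def, smul_smul, smul_smul]
      rw [show c + c + c * c * s = c + (c + c * c * s) by ring, add_smul, add_smul]
      abel
    have hBB : B * B = M := by
      rcases eq_or_ne s 0 with h0 | h0
      · have hθ0 : vecMulVec θs θs = 0 := by
          have hsum0 : ∑ i, θs i ^ 2 = 0 := by rw [← hs_def]; exact h0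
          have hz : ∀ i, θs i = 0 := by
            intro i
            have := (Finset.sum_eq_zero_iff_of_nonneg
              (fun i _ => sq_nonneg (θs i))).mp hsum0 i (Finset.mem_univ i)
            exact sq_eq_zero_iff.mp this
          ext i j; simp [vecMulVec_apply, hz]
        rw [hB2, hθ0, hMdef, hθ0]
        simp
      · have hr : Real.sqrt (1 + s) ^ 2 = 1 + s := Real.sq_sqrt (le_of_lt hs1)
        have hcs : c + c + c * c * s = 1 := by
          rw [hc_def]
          field_simp
          nlinarith [hr]
        rw [hB2, hcs, one_smul, hMdef]
    have hdetB2 : B.det * B.det = 1 + s := by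
      rw [← Matrix.det_mul, hBB, hdet]
    have hdetBne : B.det ≠ 0 := by
      intro h; rw [h, mul_zero] at hdetB2; linarith
    have hUnit : IsUnit B.det := isUnit_iff_ne_zero.mpr hdetBne
    have hBBinv : B * B⁻¹ = 1 := Matrix.mul_nonsing_inv B hUnit
    have habs : |B.det| = Real.sqrt (1 + s) := by
      rw [← Real.sqrt_sq_eq_abs, sq, hdetB2]
    have hMinv2 : M⁻¹ = B⁻¹ * B⁻¹ := by
      apply Matrix.inv_eq_right_inv
      rw [← hBB, Matrix.mul_assoc, ← Matrix.mul_assoc B B⁻¹, hBBinv, Matrix.one_mul, hBBinv]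
    have hBt : Bᵀ = B := by
      rw [hB_def, Matrix.transpose_add, Matrix.transpose_one, Matrix.transpose_smul,
        Ptrans θs]
    have hBinvT : B⁻¹ᵀ = B⁻¹ := by rw [Matrix.transpose_nonsing_inv, hBt]
    set u : Fin d → ℝ := B⁻¹ *ᵥ v with hu_def
    have hBu : B *ᵥ u = v := by
      rw [hu_def, Matrix.mulVec_mulVec, hBBinv, Matrix.one_mulVec]
    have husq : v ⬝ᵥ (M⁻¹ *ᵥ v) = ∑ i, u i ^ 2 := by
      rw [hMinv2, ← Matrix.mulVec_mulVec, Matrix.dotProduct_mulVec,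
        ← Matrix.mulVec_transpose, hBinvT]
      simp [dotProduct, sq, hu_def]
    have key1 : ∀ z : Fin d → ℝ, ∑ i, u i * (B *ᵥ z) i = ∑ i, z i * v i := by
      intro z
      have h1 : ∑ i, u i * (B *ᵥ z) i = u ⬝ᵥ (B *ᵥ z) := rfl
      rw [h1, Matrix.dotProduct_mulVec, ← Matrix.mulVec_transpose, hBt, hBu]
      simp [dotProduct, mul_comm]
    have key2 : ∀ z : Fin d → ℝ,
        ∑ i, ((B *ᵥ z) i) ^ 2 = (∑ i, z i ^ 2) + (∑ i, θs i * z i) ^ 2 := by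
      intro z
      have h1 : ∑ i, ((B *ᵥ z) i) ^ 2 = (B *ᵥ z) ⬝ᵥ (B *ᵥ z) := by
        simp [dotProduct, sq]
      rw [h1, Matrix.dotProduct_mulVec, ← Matrix.mulVec_transpose, hBt,
        Matrix.mulVec_mulVec, hBB, hMdef, Matrix.add_mulVec, Matrix.one_mulVec, Pv θs z,
        add_dotProduct, smul_dotProduct, smul_eq_mul]
      have h3 : θs ⬝ᵥ z = ∑ i, θs i * z i := rfl
      have h4 : z ⬝ᵥ z = ∑ i, z i ^ 2 := by simp [dotProduct, sq]
      rw [h3, h4]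
      ring
    -- analytic part
    set K : (Fin d → ℝ) → ℝ :=
      fun x => (∑ i, u i * x i) ^ 2 * Real.exp (-(∑ i, x i ^ 2) / 2) with hK_def
    obtain ⟨hKint, hKval⟩ := gauss_pi u
    have hKcont : Continuous K := by
      apply Continuous.mul
      · exact (continuous_finset_sum _ fun i _ =>
          continuous_const.mul (continuous_apply i)).pow 2
      · exact Real.continuous_exp.comp
          (((continuous_finset_sum _ fun i _ => (continuous_apply i).pow 2)).neg.div_const 2)
    have hφB : Measurable (Matrix.toLin' B) := (LinearMap.continuous_on_pi _).measurable
    have hmap : Measure.map (Matrix.toLin' B) volume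
        = ENNReal.ofReal |(B.det)⁻¹| • volume :=
      Real.map_matrix_volume_pi_eq_smul_volume_pi hdetBne
    have hKmap_int : Integrable K (Measure.map (Matrix.toLin' B) volume) := by
      rw [hmap]; exact hKint.smul_measure ENNReal.ofReal_ne_top
    have hKcomp : Integrable (fun z => K (Matrix.toLin' B z)) volume :=
      (integrable_map_measure hKcont.aestronglyMeasurable hφB.aemeasurable).mp hKmap_int
    set h : (Fin d → ℝ) → ℝ := fun z =>
      (∑ i, z i * v i) ^ 2
        * Real.exp (-((∑ i, z i ^ 2) + (∑ i, θs i * z i) ^ 2) / 2) with hh_def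
    have hhK : ∀ z, h z = K (Matrix.toLin' B z) := by
      intro z
      simp only [hh_def, hK_def, Matrix.toLin'_apply]
      rw [key1 z, key2 z]
    have hhint : Integrable h := hKcomp.congr (ae_of_all _ fun z => (hhK z).symm)
    have hhval : ∫ z, h z
        = |B.det|⁻¹ * (Real.sqrt (2 * Real.pi) ^ d * ∑ i, u i ^ 2) := by
      have e1 : ∫ z, h z = ∫ z, K (Matrix.toLin' B z) :=
        integral_congr_ae (ae_of_all _ hhK)
      rw [e1, ← integral_map hφB.aemeasurable hKcont.aestronglyMeasurable, hmap,
        integral_smul_measure, hKval, ENNReal.toReal_ofReal (abs_nonneg _), abs_inv]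
      simp [smul_eq_mul]
    set e : ℝ := (Real.sqrt (2 * Real.pi))⁻¹ with he_def
    have hprodφ : ∀ z : Fin d → ℝ,
        ∏ i, φ (z i) = e ^ d * Real.exp (-(∑ i, z i ^ 2) / 2) := by
      intro z
      rw [hφdef]
      simp only
      rw [Finset.prod_mul_distrib, Finset.prod_const, Finset.card_univ, Fintype.card_fin,
        ← Real.exp_sum]
      congr 2
      simp [neg_div, ← Finset.sum_div]
    have hpt : ∀ z : Fin d → ℝ,
        (∑ i, z i * v i) ^ 2 * f z * φ (∑ i, θs i * z i) * ∏ i, φ (z i)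
          ≤ (C * e ^ (d + 1)) * h z := by
      intro z
      rw [hprodφ z, hφdef]
      simp only
      have he0 : 0 < e := by rw [he_def]; positivity
      have hE : Real.exp (-(∑ i, θs i * z i) ^ 2 / 2) * Real.exp (-(∑ i, z i ^ 2) / 2)
          = Real.exp (-((∑ i, z i ^ 2) + (∑ i, θs i * z i) ^ 2) / 2) := by
        rw [← Real.exp_add]; congr 1; ring
      calc (∑ i, z i * v i) ^ 2 * f z * (e * Real.exp (-(∑ i, θs i * z i) ^ 2 / 2))
            * (e ^ d * Real.exp (-(∑ i, z i ^ 2) / 2))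
          = f z * (e ^ (d + 1) * ((∑ i, z i * v i) ^ 2 *
              (Real.exp (-(∑ i, θs i * z i) ^ 2 / 2)
                * Real.exp (-(∑ i, z i ^ 2) / 2)))) := by ring
        _ = f z * (e ^ (d + 1) * ((∑ i, z i * v i) ^ 2 *
              Real.exp (-((∑ i, z i ^ 2) + (∑ i, θs i * z i) ^ 2) / 2))) := by rw [hE]
        _ ≤ C * (e ^ (d + 1) * ((∑ i, z i * v i) ^ 2 *
              Real.exp (-((∑ i, z i ^ 2) + (∑ i, θs i * z i) ^ 2) / 2))) := by
            apply mul_le_mul_of_nonneg_right (hfC z)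
            positivity
        _ = (C * e ^ (d + 1)) * h z := by simp only [hh_def]; ring
    have hnonneg : ∀ z : Fin d → ℝ,
        0 ≤ (∑ i, z i * v i) ^ 2 * f z * φ (∑ i, θs i * z i) * ∏ i, φ (z i) := by
      intro z
      have h1 : 0 ≤ φ (∑ i, θs i * z i) := by rw [hφdef]; positivity
      have h2 : 0 ≤ ∏ i, φ (z i) := Finset.prod_nonneg fun i _ => by rw [hφdef]; positivity
      have h3 := hf0 z
      have h4 : 0 ≤ (∑ i, z i * v i) ^ 2 := sq_nonneg _
      positivity
    have hIle : (∫ z : Fin d → ℝ,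
          (∑ i, z i * v i) ^ 2 * f z * φ (∑ i, θs i * z i) * ∏ i, φ (z i))
        ≤ ∫ z, (C * e ^ (d + 1)) * h z :=
      integral_mono_of_nonneg (ae_of_all _ hnonneg) (hhint.const_mul _) (ae_of_all _ hpt)
    have hval : ∫ z, (C * e ^ (d + 1)) * h z
        = C * (v ⬝ᵥ (M⁻¹ *ᵥ v)) / (Real.sqrt (2 * Real.pi) * Real.sqrt M.det) := by
      rw [integral_const_mul, hhval, habs, hdet, husq, he_def, inv_pow, pow_succ]
      have hpow : Real.sqrt (2 * Real.pi) ^ d ≠ 0 := by positivity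
      have hsq : Real.sqrt (1 + s) ≠ 0 := by positivity
      field_simp
    have hrw : 2 * C * (v ⬝ᵥ (M⁻¹ *ᵥ v)) / (Real.sqrt (2 * Real.pi) * Real.sqrt M.det)
        = 2 * (C * (v ⬝ᵥ (M⁻¹ *ᵥ v)) / (Real.sqrt (2 * Real.pi) * Real.sqrt M.det)) := by
      ring
    rw [hrw]
    have := hval ▸ hIle
    linarith
  · rw [hdet]
    have hd : 0 < Real.sqrt (2 * Real.pi) * Real.sqrt (1 + s) :=
      mul_pos hsqrtpi (Real.sqrt_pos.mpr hs1)
    have h2C : 2 * C * (v ⬝ᵥ (M⁻¹ *ᵥ v)) ≤ 2 * C := by nlinarith [hq1, hq0]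
    exact (div_le_div_iff_of_pos_right hd).mpr (by linarith)
end

section
/- Let K: ℝ → ℝ be an even kernel with |K(t)| ≤ K_max, ∫K = 1, and suppose ∫_{c}^{∞}|K(t)|dt ≤ ε. Let f be a density bounded by p_max, l times differentiable at a point x₀ with the l-th derivative satisfying the Hölder bound |f^{(l)}(x₀+Δ) − f^{(l)}(x₀)| ≤ L|Δ|^{β−l} (l = ⌊β⌋), and suppose ∫ t^j K(t)dt = 0 for 1 ≤ j ≤ l and ∫|K(t)||t|^β dt < ∞. Then for any interval [A, B] ⊇ [x₀ − cδ, x₀ + cδ], |∫_A^B (1/δ)K((x−x₀)/δ)f(x)dx − f(x₀)| ≤ (L/l!)·δ^β·∫|K(u)||u|^β du + 2 p_max ε. -/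
open MeasureTheory Set

lemma iterWithin_eq {f : ℝ → ℝ} {l m : ℕ} (hf : ContDiff ℝ (l : ℕ∞) f) {s : Set ℝ}
    (hs : UniqueDiffOn ℝ s) (hm : m ≤ l) {x : ℝ} (hx : x ∈ s) :
    iteratedDerivWithin m f s x = iteratedDeriv m f x := by
  have h := ((contDiff_iff_ftaylorSeries.mp hf).hasFTaylorSeriesUpToOn
    s).eq_iteratedFDerivWithin_of_uniqueDiffOn (by exact_mod_cast hm) hs hx
  rw [iteratedDerivWithin_eq_iteratedFDerivWithin, iteratedDeriv_eq_iteratedFDeriv, ← h]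
  rfl

lemma taylor_step {f : ℝ → ℝ} {l : ℕ} {x₀ L β Δ : ℝ} (hl : 1 ≤ l)
    (hfd : ContDiff ℝ (l : ℕ∞) f) (hβl : (l : ℝ) < β) (hL : 0 ≤ L)
    (hHolder : ∀ Δ : ℝ,
      |iteratedDeriv l f (x₀ + Δ) - iteratedDeriv l f x₀| ≤ L * |Δ| ^ (β - l))
    (hΔ : 0 < Δ) :
    |f (x₀ + Δ) - ∑ j ∈ Finset.range (l + 1),
        iteratedDeriv j f x₀ * Δ ^ j / j.factorial|
      ≤ L / l.factorial * Δ ^ β := by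
  obtain ⟨n, rfl⟩ : ∃ n, l = n + 1 := ⟨l - 1, (Nat.succ_pred_eq_of_pos hl).symm⟩
  set x := x₀ + Δ with hxdef
  have hx : x₀ < x := by simp [hxdef]; linarith
  have hud : UniqueDiffOn ℝ (Icc x₀ x) := uniqueDiffOn_Icc hx
  have hfC : ContDiffOn ℝ n f (Icc x₀ x) :=
    (hfd.of_le (by exact_mod_cast Nat.le_succ n)).contDiffOn
  have hderiv : Differentiable ℝ (iteratedDeriv n f) :=
    hfd.differentiable_iteratedDeriv n (by exact_mod_cast Nat.lt_succ_self n)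
  have hf' : DifferentiableOn ℝ (iteratedDerivWithin n f (Icc x₀ x)) (Ioo x₀ x) :=
    hderiv.differentiableOn.congr fun y hy =>
      iterWithin_eq hfd hud (Nat.le_succ n) (Ioo_subset_Icc_self hy)
  obtain ⟨ξ, hξ, hrem⟩ := taylor_mean_remainder_lagrange hx.ne
    (by rwa [uIcc_of_le hx.le]) (by rwa [uIcc_of_le hx.le, uIoo_of_le hx.le])
  rw [uIoo_of_le hx.le] at hξ; rw [uIcc_of_le hx.le] at hrem
  rw [taylor_within_apply] at hrem
  have hsum : ∑ k ∈ Finset.range (n + 1),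
      (((k.factorial : ℝ))⁻¹ * (x - x₀) ^ k) • iteratedDerivWithin k f (Icc x₀ x) x₀
      = ∑ k ∈ Finset.range (n + 1), iteratedDeriv k f x₀ * Δ ^ k / k.factorial := by
    refine Finset.sum_congr rfl fun k hk => ?_
    rw [Finset.mem_range] at hk
    rw [iterWithin_eq hfd hud (by omega : k ≤ n + 1) (left_mem_Icc.mpr hx.le)]
    have : x - x₀ = Δ := by simp [hxdef]
    rw [this]; simp [smul_eq_mul]; ring
  rw [hsum, iterWithin_eq hfd hud le_rfl (Ioo_subset_Icc_self hξ)] at hrem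
  have hxx : x - x₀ = Δ := by simp [hxdef]
  rw [hxx] at hrem
  have hgoal : f x - ∑ j ∈ Finset.range (n + 2),
      iteratedDeriv j f x₀ * Δ ^ j / j.factorial
      = (iteratedDeriv (n + 1) f ξ - iteratedDeriv (n + 1) f x₀) * Δ ^ (n + 1)
        / (n + 1).factorial := by
    rw [Finset.sum_range_succ]
    have h2 : (iteratedDeriv (n + 1) f ξ - iteratedDeriv (n + 1) f x₀) * Δ ^ (n + 1)
        / ((n + 1).factorial : ℝ)
        = iteratedDeriv (n + 1) f ξ * Δ ^ (n + 1) / ((n + 1).factorial : ℝ)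
          - iteratedDeriv (n + 1) f x₀ * Δ ^ (n + 1) / ((n + 1).factorial : ℝ) := by ring
    rw [h2, ← hrem]; ring
  rw [hgoal]
  have hξd : iteratedDeriv (n + 1) f ξ - iteratedDeriv (n + 1) f x₀
      = iteratedDeriv (n + 1) f (x₀ + (ξ - x₀)) - iteratedDeriv (n + 1) f x₀ := by
    ring_nf
  have hbd : |iteratedDeriv (n + 1) f ξ - iteratedDeriv (n + 1) f x₀|
      ≤ L * Δ ^ (β - (n + 1 : ℕ)) := by
    rw [hξd]
    refine (hHolder (ξ - x₀)).trans ?_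
    have h1 : |ξ - x₀| ≤ Δ := by
      rw [abs_of_pos (by linarith [hξ.1])]
      have := hξ.2; simp [hxdef] at this; linarith
    exact mul_le_mul_of_nonneg_left
      (Real.rpow_le_rpow (abs_nonneg _) h1 (by push_cast at hβl ⊢; linarith)) hL
  rw [abs_div, abs_mul, abs_of_pos (pow_pos hΔ _)]
  rw [abs_of_pos (by positivity : (0:ℝ) < ((n+1).factorial : ℝ))]
  rw [div_le_iff₀ (by positivity)]
  calc |iteratedDeriv (n + 1) f ξ - iteratedDeriv (n + 1) f x₀| * Δ ^ (n + 1)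
      ≤ (L * Δ ^ (β - (n + 1 : ℕ))) * Δ ^ (n + 1) :=
        mul_le_mul_of_nonneg_right hbd (by positivity)
    _ = L * Δ ^ β := by
        rw [mul_assoc, ← Real.rpow_natCast Δ (n + 1), ← Real.rpow_add hΔ]
        push_cast; ring_nf
    _ = L / (n + 1).factorial * Δ ^ β * ((n + 1).factorial : ℝ) := by
        field_simp

lemma taylor_bound {f : ℝ → ℝ} {l : ℕ} {x₀ L β : ℝ}
    (hfd : ContDiff ℝ (l : ℕ∞) f) (hβl : (l : ℝ) < β) (hL : 0 ≤ L)
    (hHolder : ∀ Δ : ℝ,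
      |iteratedDeriv l f (x₀ + Δ) - iteratedDeriv l f x₀| ≤ L * |Δ| ^ (β - l))
    (Δ : ℝ) :
    |f (x₀ + Δ) - ∑ j ∈ Finset.range (l + 1),
        iteratedDeriv j f x₀ * Δ ^ j / j.factorial|
      ≤ L / l.factorial * |Δ| ^ β := by
  have hβ0 : 0 < β := lt_of_le_of_lt (Nat.cast_nonneg l) hβl
  rcases Nat.eq_zero_or_pos l with hl0 | hl
  · subst hl0
    simpa [iteratedDeriv_zero] using hHolder Δ
  rcases lt_trichotomy Δ 0 with hneg | hzero | hpos
  · -- reflect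
    set g : ℝ → ℝ := fun t => f (2 * x₀ + -t) with hg
    have hgder : ∀ (j : ℕ) (y : ℝ),
        iteratedDeriv j g y = (-1 : ℝ) ^ j * iteratedDeriv j f (2 * x₀ + -y) := by
      intro j y
      have h1 : iteratedDeriv j g y
          = (-1 : ℝ) ^ j • iteratedDeriv j (fun z => f (2 * x₀ + z)) (-y) :=
        iteratedDeriv_comp_neg j (fun z => f (2 * x₀ + z)) y
      rw [h1, iteratedDeriv_comp_const_add j f (2 * x₀)]
      simp [smul_eq_mul]
    have hgc : ContDiff ℝ (l : ℕ∞) g :=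
      hfd.comp ((contDiff_const.add contDiff_id.neg))
    have hgH : ∀ Δ' : ℝ,
        |iteratedDeriv l g (x₀ + Δ') - iteratedDeriv l g x₀| ≤ L * |Δ'| ^ (β - l) := by
      intro Δ'
      rw [hgder, hgder]
      have e1 : 2 * x₀ + -(x₀ + Δ') = x₀ + -Δ' := by ring
      have e2 : 2 * x₀ + -x₀ = x₀ + 0 := by ring
      rw [e1, e2, ← mul_sub, abs_mul, abs_pow, abs_neg, abs_one, one_pow, one_mul]
      simpa using hHolder (-Δ')
    have hstep := taylor_step hl hgc hβl hL hgH (neg_pos.mpr hneg)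
    have hval : g (x₀ + -Δ) = f (x₀ + Δ) := by simp [hg]; ring_nf
    have hsum : ∑ j ∈ Finset.range (l + 1), iteratedDeriv j g x₀ * (-Δ) ^ j / j.factorial
        = ∑ j ∈ Finset.range (l + 1), iteratedDeriv j f x₀ * Δ ^ j / j.factorial := by
      refine Finset.sum_congr rfl fun j _ => ?_
      rw [hgder]
      have e2 : 2 * x₀ + -x₀ = x₀ := by ring
      rw [e2]
      rw [neg_pow Δ j]
      have hone : ((-1:ℝ)) ^ j * ((-1:ℝ)) ^ j = 1 := by
        rw [← pow_add]; exact Even.neg_one_pow ⟨j, rfl⟩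
      calc (-1:ℝ) ^ j * iteratedDeriv j f x₀ * ((-1:ℝ) ^ j * Δ ^ j) / j.factorial
          = ((-1:ℝ) ^ j * (-1:ℝ) ^ j) * (iteratedDeriv j f x₀ * Δ ^ j) / j.factorial := by
            ring
        _ = iteratedDeriv j f x₀ * Δ ^ j / j.factorial := by rw [hone]; ring
    rw [hval, hsum] at hstep
    have : |Δ| = -Δ := abs_of_neg hneg
    rw [this]
    exact hstep
  · subst hzero
    have hsum : ∑ j ∈ Finset.range (l + 1),
        iteratedDeriv j f x₀ * (0:ℝ) ^ j / j.factorial = f x₀ := by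
      rw [Finset.sum_range_succ']
      simp [iteratedDeriv_zero]
    rw [hsum]
    simp [Real.zero_rpow (ne_of_gt hβ0)]
  · have := taylor_step hl hfd hβl hL hHolder hpos
    rwa [abs_of_pos hpos]


/-- Kernel-smoothing bias bound of order δ^β: for an even, bounded kernel K of
order l (vanishing moments 1..l) with tail mass ∫_{c}^∞ |K| ≤ ε, and a density f
bounded by p_max that is l-times continuously differentiable with l-th derivative
β-Hölder at x₀ (l = ⌊β⌋, l < β ≤ l+1), for any interval [A,B] ⊇ [x₀-cδ, x₀+cδ]:
|∫_A^B (1/δ)K((x-x₀)/δ) f(x) dx - f(x₀)| ≤ (L/l!)·δ^β·∫|K(u)||u|^β du + 2 p_max ε. -/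
theorem stmt16 (K f : ℝ → ℝ) (Kmax pmax L ε δ c x₀ β A B : ℝ) (l : ℕ)
    (hδ : 0 < δ) (hc : 0 < c) (hε : 0 ≤ ε) (hL : 0 < L)
    (hβl : (l : ℝ) < β) (hβl' : β ≤ l + 1)
    (hKint : Integrable K volume)
    (hKeven : ∀ t, K (-t) = K t)
    (hKbound : ∀ t, |K t| ≤ Kmax)
    (hKone : (∫ t, K t) = 1)
    (hKtail : (∫ t in Set.Ici c, |K t|) ≤ ε)
    (hKmoments : ∀ j : ℕ, 1 ≤ j → j ≤ l → (∫ t, t ^ j * K t) = 0)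
    (hKabs : Integrable (fun t => |K t| * |t| ^ β) volume)
    (hf0 : ∀ x, 0 ≤ f x) (hfmax : ∀ x, f x ≤ pmax)
    (hfd : ContDiff ℝ l f)
    (hHolder : ∀ Δ : ℝ,
      |iteratedDeriv l f (x₀ + Δ) - iteratedDeriv l f x₀| ≤ L * |Δ| ^ (β - l))
    (hA : A ≤ x₀ - c * δ) (hB : x₀ + c * δ ≤ B) :
    |(∫ x in A..B, (1 / δ) * K ((x - x₀) / δ) * f x) - f x₀|
      ≤ (L / l.factorial) * δ ^ β * (∫ u, |K u| * |u| ^ β) + 2 * pmax * ε := by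
  have hδ' : δ ≠ 0 := ne_of_gt hδ
  have hpmax : 0 ≤ pmax := le_trans (hf0 0) (hfmax 0)
  have hfc : Continuous f := hfd.continuous
  set a : ℝ := (A - x₀) / δ with hadef
  set b : ℝ := (B - x₀) / δ with hbdef
  have ha : a ≤ -c := by
    rw [hadef, div_le_iff₀ hδ]; linarith
  have hb : c ≤ b := by
    rw [hbdef, le_div_iff₀ hδ]; linarith
  have hab : a ≤ b := by linarith
  set g : ℝ → ℝ := fun u => K u * f (x₀ + δ * u) with hgdef
  have hgm : AEStronglyMeasurable g volume :=
    hKint.aestronglyMeasurable.mul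
      ((hfc.comp (continuous_const.add (continuous_const.mul continuous_id))).aestronglyMeasurable)
  have hgbound : ∀ u, ‖g u‖ ≤ pmax * |K u| := by
    intro u
    rw [hgdef]
    simp only [norm_mul, Real.norm_eq_abs]
    rw [abs_of_nonneg (hf0 _)]
    calc |K u| * f (x₀ + δ * u) ≤ |K u| * pmax :=
          mul_le_mul_of_nonneg_left (hfmax _) (abs_nonneg _)
      _ = pmax * |K u| := mul_comm _ _
  have hgi : Integrable g volume :=
    Integrable.mono' (hKint.abs.const_mul pmax) hgm (Filter.Eventually.of_forall hgbound)
  have hsub : (∫ x in A..B, (1 / δ) * K ((x - x₀) / δ) * f x) = ∫ u in a..b, g u := by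
    have key : ∀ x : ℝ, (1 / δ) * K ((x - x₀) / δ) * f x = (1 / δ) * g (x / δ - x₀ / δ) := by
      intro x
      have h1 : x / δ - x₀ / δ = (x - x₀) / δ := (sub_div _ _ _).symm
      have h2 : x₀ + δ * ((x - x₀) / δ) = x := by field_simp; ring
      rw [hgdef]; simp only [h1, h2]; ring
    rw [intervalIntegral.integral_congr (fun x _ => key x),
      intervalIntegral.integral_const_mul,
      intervalIntegral.integral_comp_div_sub g hδ' (x₀ / δ), smul_eq_mul, ← mul_assoc,
      one_div_mul_cancel hδ', one_mul, hadef, hbdef, sub_div, sub_div]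
  have hsplit : (∫ u, g u) = (∫ u in Ioc a b, g u) + ∫ u in (Ioc a b)ᶜ, g u :=
    (integral_add_compl measurableSet_Ioc hgi).symm
  have htail : |∫ u in (Ioc a b)ᶜ, g u| ≤ 2 * pmax * ε := by
    have hKa : Integrable (fun u => pmax * |K u|) volume := hKint.abs.const_mul pmax
    have h0 : |∫ u in (Ioc a b)ᶜ, g u| ≤ ∫ u in (Ioc a b)ᶜ, ‖g u‖ :=
      norm_integral_le_integral_norm g
    have h1 : |∫ u in (Ioc a b)ᶜ, g u| ≤ ∫ u in (Ioc a b)ᶜ, pmax * |K u| :=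
      h0.trans (setIntegral_mono_on hgi.norm.integrableOn hKa.integrableOn
        measurableSet_Ioc.compl (fun u _ => hgbound u))
    have hsubset : (Ioc a b)ᶜ ⊆ Iic (-c) ∪ Ici c := by
      intro x hx
      rw [mem_compl_iff, mem_Ioc, not_and_or, not_lt, not_le] at hx
      rcases hx with h | h
      · exact Or.inl (le_trans h ha)
      · exact Or.inr (le_trans hb h.le)
    have h2 : (∫ u in (Ioc a b)ᶜ, pmax * |K u|) ≤ ∫ u in Iic (-c) ∪ Ici c, pmax * |K u| := by
      refine setIntegral_mono_set hKa.integrableOn ?_ (HasSubset.Subset.eventuallyLE hsubset)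
      exact Filter.Eventually.of_forall fun u => by positivity
    have hdisj : Disjoint (Iic (-c)) (Ici c) := by
      rw [Iic_disjoint_Ici]
      intro h; linarith
    have h3 : (∫ u in Iic (-c) ∪ Ici c, pmax * |K u|)
        = (∫ u in Iic (-c), pmax * |K u|) + ∫ u in Ici c, pmax * |K u| :=
      setIntegral_union hdisj measurableSet_Ici hKa.integrableOn hKa.integrableOn
    have hneg : (∫ u in Iic (-c), |K u|) = ∫ u in Ici c, |K u| := by
      have : ∀ u : ℝ, |K u| = |K (-u)| := fun u => by rw [hKeven]
      calc (∫ u in Iic (-c), |K u|) = ∫ u in Iic (-c), |K (-u)| := by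
            exact setIntegral_congr_fun measurableSet_Iic fun u _ => this u
        _ = ∫ u in Ioi (-(-c)), |K u| := integral_comp_neg_Iic (-c) (fun x => |K x|)
        _ = ∫ u in Ici c, |K u| := by rw [neg_neg, ← integral_Ici_eq_integral_Ioi]
    calc |∫ u in (Ioc a b)ᶜ, g u|
        ≤ (∫ u in Iic (-c), pmax * |K u|) + ∫ u in Ici c, pmax * |K u| :=
          le_trans h1 (le_trans h2 (le_of_eq h3))
      _ = pmax * ((∫ u in Iic (-c), |K u|) + ∫ u in Ici c, |K u|) := by
          rw [integral_const_mul, integral_const_mul]; ring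
      _ = pmax * (2 * ∫ u in Ici c, |K u|) := by rw [hneg]; ring
      _ ≤ pmax * (2 * ε) := by
          refine mul_le_mul_of_nonneg_left ?_ hpmax
          linarith [hKtail]
      _ = 2 * pmax * ε := by ring
  have hmain : |(∫ u, g u) - f x₀|
      ≤ (L / l.factorial) * δ ^ β * (∫ u, |K u| * |u| ^ β) := by
    set T : ℝ → ℝ := fun u => ∑ j ∈ Finset.range (l + 1),
        iteratedDeriv j f x₀ * (δ * u) ^ j / j.factorial with hTdef
    -- integrability of moment functions
    have hpow : ∀ m : ℕ, (m : ℝ) ≤ β → Integrable (fun u => u ^ m * K u) volume := by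
      intro m hm
      refine Integrable.mono' (hKint.abs.add hKabs)
        ((measurable_id.pow_const m).aestronglyMeasurable.mul hKint.aestronglyMeasurable)
        (Filter.Eventually.of_forall fun u => ?_)
      have hb : |u| ^ m ≤ 1 + |u| ^ β := by
        rcases le_or_gt (|u|) 1 with h | h
        · have h1 : |u| ^ m ≤ 1 := pow_le_one₀ (abs_nonneg u) h
          have h2 : (0:ℝ) ≤ |u| ^ β := Real.rpow_nonneg (abs_nonneg u) β
          linarith
        · have h1 : |u| ^ m = |u| ^ (m : ℝ) := (Real.rpow_natCast _ m).symm
          have h2 : |u| ^ (m : ℝ) ≤ |u| ^ β :=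
            Real.rpow_le_rpow_of_exponent_le h.le hm
          linarith [h1 ▸ h2]
      calc ‖u ^ m * K u‖ = |u| ^ m * |K u| := by
            rw [norm_mul, Real.norm_eq_abs, Real.norm_eq_abs, abs_pow]
        _ ≤ (1 + |u| ^ β) * |K u| := mul_le_mul_of_nonneg_right hb (abs_nonneg _)
        _ = |K u| + |K u| * |u| ^ β := by ring
    have hmom : ∀ j ∈ Finset.range l,
        Integrable (fun u => (iteratedDeriv (j + 1) f x₀ * δ ^ (j + 1) /
          (j + 1).factorial) * (u ^ (j + 1) * K u)) volume := by
      intro j hj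
      rw [Finset.mem_range] at hj
      refine (hpow (j + 1) ?_).const_mul _
      have hjl : (j : ℝ) + 1 ≤ l := by exact_mod_cast hj
      push_cast
      linarith
    -- sum function
    set S : ℝ → ℝ := fun u => ∑ j ∈ Finset.range l,
        (iteratedDeriv (j + 1) f x₀ * δ ^ (j + 1) / (j + 1).factorial)
          * (u ^ (j + 1) * K u) with hSdef
    have hSint : Integrable S volume := integrable_finset_sum _ hmom
    have hSzero : (∫ u, S u) = 0 := by
      rw [hSdef, integral_finset_sum _ hmom]
      refine Finset.sum_eq_zero fun j hj => ?_
      rw [Finset.mem_range] at hj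
      rw [integral_const_mul, hKmoments (j + 1) (by omega) (by omega)]
      ring
    -- pointwise decomposition
    have hdecomp : ∀ u, g u - K u * f x₀ = K u * (f (x₀ + δ * u) - T u) + S u := by
      intro u
      have hTS : K u * (T u - f x₀) = S u := by
        rw [hTdef, hSdef]
        simp only
        rw [Finset.sum_range_succ']
        simp only [pow_zero, mul_one, Nat.factorial_zero, Nat.cast_one, div_one,
          iteratedDeriv_zero]
        rw [add_sub_cancel_right, Finset.mul_sum]
        refine Finset.sum_congr rfl fun j _ => ?_
        rw [mul_pow]
        ring
      rw [hgdef]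
      simp only
      rw [← hTS]
      ring
    -- remainder integrability
    have hRint : Integrable (fun u => K u * (f (x₀ + δ * u) - T u)) volume := by
      have : (fun u => K u * (f (x₀ + δ * u) - T u))
          = fun u => (g u - K u * f x₀) - S u := by
        funext u
        have := hdecomp u
        linarith
      rw [this]
      exact (hgi.sub (hKint.mul_const (f x₀))).sub hSint
    -- identity
    have hid : (∫ u, g u) - f x₀ = ∫ u, K u * (f (x₀ + δ * u) - T u) := by
      have h1 : (∫ u, g u) - f x₀ = ∫ u, g u - K u * f x₀ := by
        rw [integral_sub hgi (hKint.mul_const (f x₀)), integral_mul_const, hKone]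
        ring
      rw [h1]
      have h2 : (∫ u, g u - K u * f x₀)
          = (∫ u, K u * (f (x₀ + δ * u) - T u)) + ∫ u, S u := by
        rw [← integral_add hRint hSint]
        exact integral_congr_ae (Filter.Eventually.of_forall fun u => hdecomp u)
      rw [h2, hSzero, add_zero]
    rw [hid]
    -- final bound
    have hptwise : ∀ u, ‖K u * (f (x₀ + δ * u) - T u)‖
        ≤ (L / l.factorial * δ ^ β) * (|K u| * |u| ^ β) := by
      intro u
      have htb := taylor_bound hfd hβl hL.le hHolder (δ * u)
      have habs : |δ * u| ^ β = δ ^ β * |u| ^ β := by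
        rw [abs_mul, abs_of_pos hδ, Real.mul_rpow hδ.le (abs_nonneg u)]
      rw [norm_mul, Real.norm_eq_abs, Real.norm_eq_abs]
      calc |K u| * |f (x₀ + δ * u) - T u|
          ≤ |K u| * (L / l.factorial * |δ * u| ^ β) :=
            mul_le_mul_of_nonneg_left htb (abs_nonneg _)
        _ = (L / l.factorial * δ ^ β) * (|K u| * |u| ^ β) := by rw [habs]; ring
    calc |∫ u, K u * (f (x₀ + δ * u) - T u)|
        ≤ ∫ u, ‖K u * (f (x₀ + δ * u) - T u)‖ :=
          norm_integral_le_integral_norm (fun u => K u * (f (x₀ + δ * u) - T u))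
      _ ≤ ∫ u, (L / l.factorial * δ ^ β) * (|K u| * |u| ^ β) :=
          integral_mono hRint.norm (hKabs.const_mul _) (fun u => hptwise u)
      _ = (L / l.factorial) * δ ^ β * ∫ u, |K u| * |u| ^ β := by
          rw [integral_const_mul]
  rw [hsub, intervalIntegral.integral_of_le hab]
  have hsplit2 : (∫ u in Ioc a b, g u) - f x₀
      = ((∫ u, g u) - f x₀) - ∫ u in (Ioc a b)ᶜ, g u := by
    rw [hsplit]; ring
  rw [hsplit2]
  calc |((∫ u, g u) - f x₀) - ∫ u in (Ioc a b)ᶜ, g u|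
      ≤ |(∫ u, g u) - f x₀| + |∫ u in (Ioc a b)ᶜ, g u| := abs_sub _ _
    _ ≤ (L / l.factorial) * δ ^ β * (∫ u, |K u| * |u| ^ β) + 2 * pmax * ε :=
        add_le_add hmain htail
end

section
/- Let t > 0, β ≥ 2, and define N_K = N/2 and N_{K−j} = t^{(1−β^{−j})/(β−1)}·(N/2)^{β^{−j}} for 1 ≤ j ≤ K−2 (i.e., N_k = (t·N_{k+1})^{1/β}). If N ≥ t^{1/(β−1)}·2^K, then N_{K−j} ≤ N/2^{j+1} for all 0 ≤ j ≤ K−2. -/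
/-- Budget allocation: with N_K = N/2 and N_{K-j} = t^{(1-β^{-j})/(β-1)}·(N/2)^{β^{-j}}
(solving N_k = (t·N_{k+1})^{1/β}), if N ≥ t^{1/(β-1)}·2^K and β ≥ 2, then
N_{K-j} ≤ N/2^{j+1} for all 0 ≤ j ≤ K-2. -/
theorem stmt17 (t β N : ℝ) (K : ℕ) (ht : 0 < t) (hβ : 2 ≤ β) (hN : 0 < N)
    (hbudget : t ^ (1 / (β - 1)) * 2 ^ K ≤ N) :
    ∀ j : ℕ, j ≤ K - 2 →
      t ^ ((1 - β ^ (-(j : ℝ))) / (β - 1)) * (N / 2) ^ (β ^ (-(j : ℝ)))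
        ≤ N / 2 ^ (j + 1) := by
  intro j hj
  have hβ0 : (0:ℝ) < β := by linarith
  set b : ℝ := β ^ (-(j:ℝ)) with hbdef
  have hb0 : 0 < b := Real.rpow_pos_of_pos hβ0 _
  have hb1 : b ≤ 1 := Real.rpow_le_one_of_one_le_of_nonpos (by linarith)
    (neg_nonpos.mpr (Nat.cast_nonneg j))
  -- key arithmetic inequality
  have hkey : b * ((K:ℝ) - 1) ≤ (K:ℝ) - j - 1 := by
    rcases le_or_gt K 1 with hK | hK
    · have hj0 : j = 0 := by omega
      subst hj0
      have : b = 1 := by simp [hbdef]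
      rw [this]
      push_cast
      ring_nf
      linarith
    · have hjK : j + 2 ≤ K := by omega
      obtain ⟨m, hm⟩ := Nat.exists_eq_add_of_le hjK
      have h2j : (0:ℝ) < (2:ℝ)^j := by positivity
      have hb2 : b ≤ ((2:ℝ)^j)⁻¹ := by
        rw [hbdef, Real.rpow_neg (le_of_lt hβ0), Real.rpow_natCast]
        exact inv_anti₀ h2j (pow_le_pow_left₀ (by norm_num) hβ j)
      have hnat : (j:ℝ) + (m:ℝ) + 1 ≤ (2:ℝ)^j * ((m:ℝ) + 1) := by
        have h1 : (j:ℝ) + 1 ≤ (2:ℝ)^j := by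
          exact_mod_cast Nat.cast_le.mpr (Nat.lt_two_pow_self (n := j))
        nlinarith [Nat.cast_nonneg (α := ℝ) m]
      have hKr : (K:ℝ) = j + 2 + m := by exact_mod_cast hm
      rw [hKr]
      calc b * ((j:ℝ) + 2 + m - 1) ≤ ((2:ℝ)^j)⁻¹ * ((2:ℝ)^j * ((m:ℝ)+1)) := by
            rw [hKr] at *
            have : (j:ℝ) + 2 + m - 1 = (j:ℝ) + m + 1 := by ring
            rw [this]
            exact mul_le_mul hb2 hnat (by positivity) (by positivity)
        _ = (m:ℝ) + 1 := by field_simp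
        _ ≤ (j:ℝ) + 2 + m - (j:ℝ) - 1 := by ring_nf; linarith
  have hL : 0 < t ^ ((1 - b) / (β - 1)) * (N / 2) ^ b := by positivity
  have hR : (0:ℝ) < N / 2 ^ (j + 1) := by positivity
  rw [← Real.log_le_log_iff hL hR]
  have hbud : (1 / (β - 1)) * Real.log t + (K:ℝ) * Real.log 2 ≤ Real.log N := by
    have h1 : Real.log (t ^ (1 / (β - 1)) * 2 ^ K) ≤ Real.log N :=
      Real.log_le_log (by positivity) hbudget
    rw [Real.log_mul (by positivity) (by positivity), Real.log_rpow ht,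
      Real.log_pow] at h1
    linarith
  rw [Real.log_mul (by positivity) (by positivity), Real.log_rpow ht,
    Real.log_rpow (by positivity), Real.log_div (ne_of_gt hN) (by norm_num),
    Real.log_div (ne_of_gt hN) (by positivity), Real.log_pow]
  have hlog2 : (0:ℝ) ≤ Real.log 2 := Real.log_nonneg one_le_two
  have e1 : (1 - b) * ((1 / (β - 1)) * Real.log t + (K:ℝ) * Real.log 2)
      ≤ (1 - b) * Real.log N := mul_le_mul_of_nonneg_left hbud (by linarith)
  have e2 : ((j:ℝ) + 1 - b) * Real.log 2 ≤ ((K:ℝ) * (1 - b)) * Real.log 2 :=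
    mul_le_mul_of_nonneg_right (by nlinarith [hkey]) hlog2
  have e3 : (1 - b) / (β - 1) * Real.log t
      = (1 - b) * ((1 / (β - 1)) * Real.log t) := by ring
  push_cast
  nlinarith [e1, e2, e3]
end
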